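/- arXiv:2411.04506 — 2 statements merged into one kernel-verified Lean document; each statement's English description precedes it below -/
import Mathlib

section
/- If (π₁, π₂) is a chainable pair of patterns, then, as matrices with natural-number entries, S_{π₁} · S_{π₂} = r(π₁, π₂) · S_{π₁ * π₂}. -/
/-- A *pattern* is a tuple `(a, b, c, d)` of (positive) natural numbers. -/
structure Pattern where
  a : ℕ
  b : ℕ
  c : ℕ
  d : ℕ

namespace Pattern

/-- The entries of a pattern are positive integers. -/
def Pos (π : Pattern) : Prop := 0 < π.a ∧ 0 < π.b ∧ 0 < π.c ∧ 0 < π.d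

/-- Number of rows `a*b*d` of a `π`-factor. -/
def rows (π : Pattern) : ℕ := π.a * π.b * π.d

/-- Number of columns `a*c*d` of a `π`-factor. -/
def cols (π : Pattern) : ℕ := π.a * π.c * π.d

/-- `r(π₁, π₂) = a₁c₁/a₂ (= b₂d₂/d₁)`. -/
def rk (π₁ π₂ : Pattern) : ℕ := π₁.a * π₁.c / π₂.a

/-- A pair of patterns is *chainable* if `a₁c₁/a₂ = b₂d₂/d₁` is a positive integer,
`a₁ ∣ a₂` and `d₂ ∣ d₁`. -/
def Chainable (π₁ π₂ : Pattern) : Prop :=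
  π₂.a ∣ π₁.a * π₁.c ∧ π₁.d ∣ π₂.b * π₂.d ∧
    π₁.a * π₁.c / π₂.a = π₂.b * π₂.d / π₁.d ∧
    0 < π₁.a * π₁.c / π₂.a ∧ π₁.a ∣ π₂.a ∧ π₂.d ∣ π₁.d

/-- `π₁ * π₂ := (a₁, b₁d₁/d₂, a₂c₂/a₁, d₂)`. -/
instance : Mul Pattern :=
  ⟨fun π₁ π₂ => ⟨π₁.a, π₁.b * π₁.d / π₂.d, π₂.a * π₂.c / π₁.a, π₂.d⟩⟩

/-- `‖π‖₀ := a*b*c*d`. -/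
def norm0 (π : Pattern) : ℕ := π.a * π.b * π.c * π.d

end Pattern

open scoped Kronecker

/-- The flattening equivalence `(Fin a × Fin b) × Fin d ≃ Fin (a*b*d)`. -/
def kron3Equiv (a b d : ℕ) : (Fin a × Fin b) × Fin d ≃ Fin (a * b * d) :=
  (finProdFinEquiv.prodCongr (Equiv.refl (Fin d))).trans finProdFinEquiv

/-- The support matrix `S_π = I_a ⊗ 1_{b×c} ⊗ I_d ∈ {0,1}^{abd × acd}`. -/
def Pattern.S (π : Pattern) : Matrix (Fin π.rows) (Fin π.cols) ℕ :=
  Matrix.reindex (kron3Equiv π.a π.b π.d) (kron3Equiv π.a π.c π.d)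
    ((1 : Matrix (Fin π.a) (Fin π.a) ℕ) ⊗ₖ
      (Matrix.of fun _ _ => (1 : ℕ) : Matrix (Fin π.b) (Fin π.c) ℕ) ⊗ₖ
      (1 : Matrix (Fin π.d) (Fin π.d) ℕ))

/-- Reindexing a matrix along equalities of dimensions. -/
def castMat {α : Type*} {m n m' n' : ℕ} (hm : m = m') (hn : n = n')
    (A : Matrix (Fin m) (Fin n) α) : Matrix (Fin m') (Fin n') α :=
  Matrix.of fun i j => A (Fin.cast hm.symm i) (Fin.cast hn.symm j)

private lemma modh (x y δ d : ℕ) : (x * d + δ + y * d) % d = δ % d := by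
  rw [Nat.add_mul_mod_self_right, mul_comm, Nat.mul_add_mod]

private lemma divh (x t d : ℕ) (hd : 0 < d) (ht : t < d) : (x * d + t) / d = x := by
  rw [mul_comm, Nat.mul_add_div hd, Nat.div_eq_of_lt ht, add_zero]

private lemma iteh (P Q : Prop) [Decidable P] [Decidable Q] :
    (if P then (1:ℕ) else 0) * (if Q then 1 else 0) = if P ∧ Q then 1 else 0 := by
  by_cases hP : P <;> by_cases hQ : Q <;> simp [hP, hQ]

private lemma Pattern.S_apply (π : Pattern) (i : Fin π.rows) (j : Fin π.cols) :
    π.S i j = if (i : ℕ) / (π.d * π.b) = (j : ℕ) / (π.d * π.c) ∧ (i : ℕ) % π.d = (j : ℕ) % π.d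
      then 1 else 0 := by
  change Fin (π.a * π.b * π.d) at i; change Fin (π.a * π.c * π.d) at j
  simp only [Pattern.S, Matrix.reindex_apply, Matrix.submatrix_apply, kron3Equiv,
    Equiv.symm_trans_apply, Equiv.prodCongr_symm, Equiv.prodCongr_apply, Equiv.refl_symm,
    Equiv.coe_refl, Prod.map, finProdFinEquiv_symm_apply, Matrix.kroneckerMap_apply,
    Matrix.of_apply, Matrix.one_apply, id]
  simp only [Fin.ext_iff, Fin.coe_divNat, Fin.coe_modNat, Nat.div_div_eq_div_mul]
  split_ifs <;> simp_all

private lemma key (a₁ b₁ c₁ d₁ a₂ b₂ c₂ d₂ r m i k : ℕ)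
    (hd₁ : 0 < d₁) (hrp : 0 < r)
    (ha₂ : a₂ = a₁ * m)
    (hB : d₂ * b₂ = r * d₁)
    (hC : d₁ * c₁ = m * (d₂ * b₂))
    (hdd : d₂ ∣ d₁)
    (hk : k < a₂ * c₂ * d₂) :
    (∑ j ∈ Finset.range (a₁ * c₁ * d₁),
      ((if i / (d₁ * b₁) = j / (d₁ * c₁) ∧ i % d₁ = j % d₁ then 1 else 0) *
       (if j / (d₂ * b₂) = k / (d₂ * c₂) ∧ j % d₂ = k % d₂ then 1 else 0)))
    = r * (if i / (d₁ * b₁) = k / (d₂ * c₂) / m ∧ i % d₂ = k % d₂ then 1 else 0) := by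
  classical
  set B := d₂ * b₂ with hBdef
  set α := k / (d₂ * c₂) with hα
  set δ := i % d₁ with hδ
  set N := a₁ * c₁ * d₁ with hNdef
  have hδlt : δ < d₁ := Nat.mod_lt _ hd₁
  have hBpos : 0 < B := by rw [hB]; positivity
  have hd₁B : d₁ ∣ B := ⟨r, by rw [hB, mul_comm]⟩
  obtain ⟨u, hu⟩ := id hd₁B
  obtain ⟨e, he⟩ := id hdd
  have hαlt : α < a₂ := by
    apply Nat.div_lt_of_lt_mul
    calc k < a₂ * c₂ * d₂ := hk
      _ = d₂ * c₂ * a₂ := by ring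
  have hN : N = a₂ * B := by
    calc N = a₁ * (d₁ * c₁) := by rw [hNdef]; ring
      _ = a₁ * (m * B) := by rw [hC]
      _ = a₂ * B := by rw [ha₂]; ring
  have mem1 : ∀ j < N, ((i / (d₁ * b₁) = j / (d₁ * c₁) ∧ i % d₁ = j % d₁) ∧
      (j / B = α ∧ j % d₂ = k % d₂)) →
      ((i / (d₁ * b₁) = α / m ∧ i % d₂ = k % d₂) ∧
        ∃ s < r, j = α * B + δ + s * d₁) := by
    rintro j hj ⟨⟨h1, h2⟩, h3, h4⟩
    have hjc : j / (d₁ * c₁) = α / m := by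
      rw [hC, mul_comm m B, ← Nat.div_div_eq_div_mul, h3]
    have hiδ : i % d₂ = k % d₂ := by
      rw [← h4, ← Nat.mod_mod_of_dvd i hdd, ← Nat.mod_mod_of_dvd j hdd, h2]
    have e1 : j % B % d₁ = δ := by rw [Nat.mod_mod_of_dvd j hd₁B, ← h2]
    have e3 : j % B = d₁ * (j % B / d₁) + δ := by
      conv_lhs => rw [← Nat.div_add_mod (j % B) d₁, e1]
    have e4 : j = B * α + (d₁ * (j % B / d₁) + δ) := by
      rw [← h3, ← e3]; exact (Nat.div_add_mod j B).symm
    refine ⟨⟨h1.trans hjc, hiδ⟩, (j % B) / d₁, ?_, ?_⟩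
    · apply Nat.div_lt_of_lt_mul
      calc j % B < B := Nat.mod_lt _ hBpos
        _ = d₁ * r := by rw [hB, mul_comm]
    · conv_lhs => rw [e4]
      ring
  have mem2 : ∀ s < r, (α * B + δ + s * d₁ < N) ∧
      ((i / (d₁ * b₁) = α / m ∧ i % d₂ = k % d₂) →
      ((i / (d₁ * b₁) = (α * B + δ + s * d₁) / (d₁ * c₁) ∧
        i % d₁ = (α * B + δ + s * d₁) % d₁) ∧
      ((α * B + δ + s * d₁) / B = α ∧ (α * B + δ + s * d₁) % d₂ = k % d₂))) := by
    intro s hs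
    have ht : δ + s * d₁ < B := by
      calc δ + s * d₁ < d₁ + s * d₁ := by omega
        _ = (s + 1) * d₁ := by ring
        _ ≤ r * d₁ := Nat.mul_le_mul_right _ (by omega)
        _ = B := hB.symm
    have hfs : α * B + δ + s * d₁ = α * B + (δ + s * d₁) := by ring
    have hdivB : (α * B + δ + s * d₁) / B = α := by rw [hfs]; exact divh _ _ _ hBpos ht
    constructor
    · calc α * B + δ + s * d₁ = α * B + (δ + s * d₁) := hfs
        _ < α * B + B := by omega
        _ = (α + 1) * B := by ring
        _ ≤ a₂ * B := Nat.mul_le_mul_right _ (by omega)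
        _ = N := hN.symm
    rintro ⟨hq1, hq2⟩
    have h5 : (α * B + δ + s * d₁) / (d₁ * c₁) = α / m := by
      rw [hC, mul_comm m B, ← Nat.div_div_eq_div_mul, hdivB]
    have h6 : α * B + δ + s * d₁ = (α * u) * d₁ + δ + s * d₁ := by rw [hu]; ring
    have h7 : α * B + δ + s * d₁ = (α * u * e) * d₂ + δ + (s * e) * d₂ := by
      rw [hu, he]; ring
    refine ⟨⟨hq1.trans h5.symm, ?_⟩, hdivB, ?_⟩
    · rw [h6, modh, Nat.mod_eq_of_lt hδlt, hδ]
    · rw [h7, modh, hδ, Nat.mod_mod_of_dvd i hdd, hq2]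
  have hcard : (∑ j ∈ Finset.range N,
      ((if i / (d₁ * b₁) = j / (d₁ * c₁) ∧ i % d₁ = j % d₁ then 1 else 0) *
       (if j / B = α ∧ j % d₂ = k % d₂ then 1 else 0)))
      = ((Finset.range N).filter (fun j => (i / (d₁ * b₁) = j / (d₁ * c₁) ∧ i % d₁ = j % d₁) ∧
          (j / B = α ∧ j % d₂ = k % d₂))).card := by
    rw [Finset.card_filter]
    exact Finset.sum_congr rfl fun j _ => iteh _ _
  rw [hcard]
  by_cases hQ : i / (d₁ * b₁) = α / m ∧ i % d₂ = k % d₂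
  · rw [if_pos hQ, mul_one]
    have himg : (Finset.range N).filter (fun j => (i / (d₁ * b₁) = j / (d₁ * c₁) ∧ i % d₁ = j % d₁) ∧
          (j / B = α ∧ j % d₂ = k % d₂)) = (Finset.range r).image (fun s => α * B + δ + s * d₁) := by
      ext j
      simp only [Finset.mem_filter, Finset.mem_range, Finset.mem_image]
      constructor
      · rintro ⟨hj, hP⟩
        obtain ⟨-, s, hs, rfl⟩ := mem1 j hj hP
        exact ⟨s, hs, rfl⟩
      · rintro ⟨s, hs, rfl⟩
        exact ⟨(mem2 s hs).1, (mem2 s hs).2 hQ⟩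
    have hinj : Function.Injective (fun s => α * B + δ + s * d₁) := by
      intro x y h
      simp only [add_left_cancel_iff] at h
      exact Nat.eq_of_mul_eq_mul_right hd₁ h
    rw [himg, Finset.card_image_of_injective _ hinj, Finset.card_range]
  · rw [if_neg hQ, mul_zero]
    rw [Finset.card_eq_zero, Finset.filter_eq_empty_iff]
    intro j hj hP
    exact hQ (mem1 j (Finset.mem_range.mp hj) hP).1


/-- **Proposition.** For a chainable pair `(π₁, π₂)`, one has
`S_{π₁} · S_{π₂} = r(π₁, π₂) • S_{π₁ * π₂}` as matrices with natural-number entries. -/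
theorem support_mul_eq_rk_smul (π₁ π₂ : Pattern)
    (h₁ : π₁.Pos) (h₂ : π₂.Pos) (hch : Pattern.Chainable π₁ π₂)
    (hdim : π₁.cols = π₂.rows)
    (hr : (π₁ * π₂).rows = π₁.rows) (hc : (π₁ * π₂).cols = π₂.cols) :
    π₁.S * castMat hdim.symm rfl π₂.S = Pattern.rk π₁ π₂ • castMat hr hc (π₁ * π₂).S := by
  obtain ⟨ha1, hb1, hc1, hd1⟩ := h₁
  obtain ⟨ha2, hb2, hc2, hd2⟩ := h₂
  obtain ⟨hdvA, hdvD, heq, hrpos, hA, hD⟩ := hch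
  set r := π₁.a * π₁.c / π₂.a with hrdef
  set m := π₂.a / π₁.a with hmdef
  have hm1 : π₂.a = π₁.a * m := (Nat.mul_div_cancel' hA).symm
  have hBkey : π₂.d * π₂.b = r * π₁.d := by
    have h := Nat.div_mul_cancel hdvD
    rw [← heq] at h
    rw [mul_comm π₂.d π₂.b, ← h]
  have hdim' : π₁.a * π₁.c * π₁.d = π₂.a * π₂.b * π₂.d := hdim
  have hCkey : π₁.d * π₁.c = m * (π₂.d * π₂.b) := by
    have h : π₁.a * (π₁.d * π₁.c) = π₁.a * (m * (π₂.d * π₂.b)) := by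
      calc π₁.a * (π₁.d * π₁.c) = π₁.a * π₁.c * π₁.d := by ring
        _ = π₂.a * π₂.b * π₂.d := hdim'
        _ = π₁.a * (m * (π₂.d * π₂.b)) := by rw [hm1]; ring
    exact Nat.eq_of_mul_eq_mul_left ha1 h
  ext i k
  have lhs_eq : (π₁.S * castMat hdim.symm rfl π₂.S) i k =
      ∑ j ∈ Finset.range (π₁.a * π₁.c * π₁.d),
        ((if (i:ℕ) / (π₁.d * π₁.b) = j / (π₁.d * π₁.c) ∧ (i:ℕ) % π₁.d = j % π₁.d
            then 1 else 0) *
         (if j / (π₂.d * π₂.b) = (k:ℕ) / (π₂.d * π₂.c) ∧ j % π₂.d = (k:ℕ) % π₂.d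
            then 1 else 0)) := by
    rw [Matrix.mul_apply]
    rw [show (Finset.univ : Finset (Fin π₁.cols)).sum (fun j => π₁.S i j *
        (castMat hdim.symm rfl π₂.S) j k) =
        ∑ j : Fin π₁.cols,
        ((if (i:ℕ) / (π₁.d * π₁.b) = (j:ℕ) / (π₁.d * π₁.c) ∧ (i:ℕ) % π₁.d = (j:ℕ) % π₁.d
            then 1 else 0) *
         (if (j:ℕ) / (π₂.d * π₂.b) = (k:ℕ) / (π₂.d * π₂.c) ∧ (j:ℕ) % π₂.d = (k:ℕ) % π₂.d
            then 1 else 0))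
      from Finset.sum_congr rfl fun j _ => by
        simp only [castMat, Matrix.of_apply, Pattern.S_apply, Fin.coe_cast]]
    exact Fin.sum_univ_eq_sum_range
      (fun j => (if (i:ℕ) / (π₁.d * π₁.b) = j / (π₁.d * π₁.c) ∧ (i:ℕ) % π₁.d = j % π₁.d
            then 1 else 0) *
         (if j / (π₂.d * π₂.b) = (k:ℕ) / (π₂.d * π₂.c) ∧ j % π₂.d = (k:ℕ) % π₂.d
            then 1 else 0)) (π₁.a * π₁.c * π₁.d)
  rw [lhs_eq,
    key π₁.a π₁.b π₁.c π₁.d π₂.a π₂.b π₂.c π₂.d r m (i:ℕ) (k:ℕ)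
      hd1 hrpos hm1 hBkey hCkey hD k.isLt]
  -- now the right-hand side
  have div1 : (π₁ * π₂).d * (π₁ * π₂).b = π₁.d * π₁.b := by
    show π₂.d * (π₁.b * π₁.d / π₂.d) = π₁.d * π₁.b
    rw [Nat.mul_div_cancel' (hD.trans (dvd_mul_left π₁.d π₁.b))]
    ring
  have div2 : (π₁ * π₂).d * (π₁ * π₂).c = (π₂.d * π₂.c) * m := by
    show π₂.d * (π₂.a * π₂.c / π₁.a) = (π₂.d * π₂.c) * m
    have h : π₂.a * π₂.c / π₁.a = m * π₂.c := by
      rw [hm1, mul_assoc, Nat.mul_div_cancel_left _ ha1]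
    rw [h]; ring
  rw [Matrix.smul_apply, smul_eq_mul]
  have rhs_eq : (castMat hr hc (π₁ * π₂).S) i k =
      if (i:ℕ) / (π₁.d * π₁.b) = (k:ℕ) / ((π₂.d * π₂.c) * m) ∧
         (i:ℕ) % π₂.d = (k:ℕ) % π₂.d then 1 else 0 := by
    simp only [castMat, Matrix.of_apply, Pattern.S_apply, Fin.coe_cast]
    rw [div1, div2]
    rfl
  rw [rhs_eq, Nat.div_div_eq_div_mul]
  rfl
end

section
/- Let β = (π_ℓ)_{ℓ=1}^L be a chainable architecture. Then for all integers 1 ≤ q ≤ s < t ≤ L, the pair of patterns (π_q * ⋯ * π_s, π_{s+1} * ⋯ * π_t) is chainable, and r(π_q * ⋯ * π_s, π_{s+1} * ⋯ * π_t) = r(π_s, π_{s+1}). -/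
/-- Partial products of patterns: `pprod π q k = π q * π (q+1) * ⋯ * π (q+k)`. -/
def pprod (π : ℕ → Pattern) (q : ℕ) : ℕ → Pattern
  | 0 => π q
  | k + 1 => pprod π q k * π (q + k + 1)

lemma pattern_mul_def (π₁ π₂ : Pattern) :
    π₁ * π₂ = ⟨π₁.a, π₁.b * π₁.d / π₂.d, π₂.a * π₂.c / π₁.a, π₂.d⟩ := rfl

/-- **Lemma.** If `β = (π 0, …, π (L-1))` is chainable then, for all `0 ≤ q ≤ s < t ≤ L-1`,
the pair `(π q * ⋯ * π s, π (s+1) * ⋯ * π t)` is chainable with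
`r(π q * ⋯ * π s, π (s+1) * ⋯ * π t) = r(π s, π (s+1))`. -/
theorem partial_products_chainable (L : ℕ) (π : ℕ → Pattern)
    (hPos : ∀ ℓ < L, (π ℓ).Pos)
    (hch : ∀ ℓ, ℓ + 1 < L → Pattern.Chainable (π ℓ) (π (ℓ + 1))) :
    ∀ q s t : ℕ, q ≤ s → s < t → t < L →
      Pattern.Chainable (pprod π q (s - q)) (pprod π (s + 1) (t - (s + 1))) ∧
      Pattern.rk (pprod π q (s - q)) (pprod π (s + 1) (t - (s + 1))) =
        Pattern.rk (π s) (π (s + 1)) := by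
  have adiv : ∀ i j, i ≤ j → j < L → (π i).a ∣ (π j).a := by
    intro i j hij
    induction j, hij using Nat.le_induction with
    | base => intro _; exact dvd_rfl
    | succ j hij ih =>
      intro hjL
      exact (ih (by omega)).trans (hch j (by omega)).2.2.2.2.1
  have ddiv : ∀ i j, i ≤ j → j < L → (π j).d ∣ (π i).d := by
    intro i j hij
    induction j, hij using Nat.le_induction with
    | base => intro _; exact dvd_rfl
    | succ j hij ih =>
      intro hjL
      exact ((hch j (by omega)).2.2.2.2.2).trans (ih (by omega))
  have inv : ∀ q k, q + k < L →
      (pprod π q k).a = (π q).a ∧ (pprod π q k).d = (π (q + k)).d ∧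
      (pprod π q k).b * (pprod π q k).d = (π q).b * (π q).d ∧
      (pprod π q k).a * (pprod π q k).c = (π (q + k)).a * (π (q + k)).c ∧
      (pprod π q k).Pos := by
    intro q k
    induction k with
    | zero =>
      intro h
      exact ⟨rfl, rfl, rfl, rfl, hPos q (by omega)⟩
    | succ k ih =>
      intro h
      obtain ⟨ha, hd, hbd, hac, hpos⟩ := ih (by omega)
      have hq : q + k < L := by omega
      have hq1 : q + k + 1 < L := by omega
      have hchk := hch (q + k) (by omega)
      have hPq := hPos q (by omega)
      have hPk1 := hPos (q + k + 1) hq1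
      have hdvd_d : (π (q + k + 1)).d ∣ (π q).b * (π q).d :=
        ((hchk.2.2.2.2.2).trans (ddiv q (q + k) (by omega) hq)).trans (dvd_mul_left _ _)
      have hdvd_a : (π q).a ∣ (π (q + k + 1)).a * (π (q + k + 1)).c :=
        (adiv q (q + k + 1) (by omega) hq1).trans (dvd_mul_right _ _)
      have hP : pprod π q (k + 1) = pprod π q k * π (q + k + 1) := rfl
      rw [hP, pattern_mul_def]
      refine ⟨ha, rfl, ?_, ?_, ?_⟩
      · show (pprod π q k).b * (pprod π q k).d / (π (q + k + 1)).d * (π (q + k + 1)).d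
            = (π q).b * (π q).d
        rw [hbd, Nat.div_mul_cancel hdvd_d]
      · show (pprod π q k).a * ((π (q + k + 1)).a * (π (q + k + 1)).c / (pprod π q k).a)
            = (π (q + k + 1)).a * (π (q + k + 1)).c
        rw [ha, Nat.mul_div_cancel' hdvd_a]
      · refine ⟨by rw [ha]; exact hPq.1, ?_, ?_, hPk1.2.2.2⟩
        · show 0 < (pprod π q k).b * (pprod π q k).d / (π (q + k + 1)).d
          rw [hbd]
          exact Nat.div_pos (Nat.le_of_dvd (Nat.mul_pos hPq.2.1 hPq.2.2.2) hdvd_d)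
            hPk1.2.2.2
        · show 0 < (π (q + k + 1)).a * (π (q + k + 1)).c / (pprod π q k).a
          rw [ha]
          exact Nat.div_pos (Nat.le_of_dvd (Nat.mul_pos hPk1.1 hPk1.2.2.1) hdvd_a) hPq.1
  intro q s t hqs hst htL
  obtain ⟨ha1, hd1, hbd1, hac1, hpos1⟩ := inv q (s - q) (by omega)
  obtain ⟨ha2, hd2, hbd2, hbc2, hpos2⟩ := inv (s + 1) (t - (s + 1)) (by omega)
  have e1 : q + (s - q) = s := by omega
  have e2 : s + 1 + (t - (s + 1)) = t := by omega
  rw [e1] at hd1 hac1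
  rw [e2] at hd2 hbc2
  have hchs := hch s (by omega)
  constructor
  · refine ⟨?_, ?_, ?_, ?_, ?_, ?_⟩
    · rw [hac1, ha2]; exact hchs.1
    · rw [hd1, hbd2]; exact hchs.2.1
    · rw [hac1, ha2, hd1, hbd2]; exact hchs.2.2.1
    · rw [hac1, ha2]; exact hchs.2.2.2.1
    · rw [ha1, ha2]; exact (adiv q s hqs (by omega)).trans hchs.2.2.2.2.1
    · rw [hd1, hd2]; exact ddiv s t (by omega) htL
  · show _ / _ = _
    rw [Pattern.rk, hac1, ha2]
end
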